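/- arXiv:2211.12487 — 4 statements merged into one kernel-verified Lean document; each statement's English description precedes it below -/
import Mathlib

section
/- Let d ≥ 1 be an integer. Suppose B₀ is a real matrix and for each i = 1,…,d we are given: a linear bijection ρᵢ between real matrix spaces that preserves the Frobenius norm (a reshaping), defined on the space containing B_{i-1}; a real matrix Uᵢ with orthonormal columns; real matrices Bᵢ and Eᵢ; and a real number εᵢ ≥ 0, such that ρᵢ(B_{i-1}) = Uᵢ Bᵢ + Eᵢ, Uᵢᵀ Eᵢ = 0, and ‖Eᵢ‖_F ≤ εᵢ. Define the approximations backwards by B̂_d := B_d and B̂_{i-1} := ρᵢ⁻¹(Uᵢ B̂ᵢ) for i = d, d−1, …, 1. Then ‖B₀ − B̂₀‖_F ≤ √(ε₁² + ε₂² + ⋯ + ε_d²). -/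
open Matrix

/-- Frobenius norm of a real matrix: `‖A‖_F = √(∑ᵢⱼ Aᵢⱼ²)`. -/
noncomputable def frobNorm {m n : Type*} [Fintype m] [Fintype n] (A : Matrix m n ℝ) : ℝ :=
  Real.sqrt (∑ i, ∑ j, (A i j) ^ 2)

noncomputable def frobSq {m n : Type*} [Fintype m] [Fintype n] (A : Matrix m n ℝ) : ℝ :=
  ∑ i, ∑ j, (A i j) ^ 2

lemma frobSq_nonneg {m n : Type*} [Fintype m] [Fintype n] (A : Matrix m n ℝ) : 0 ≤ frobSq A := by
  apply Finset.sum_nonneg; intro i _; apply Finset.sum_nonneg; intro j _; positivity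

lemma frobNorm_eq {m n : Type*} [Fintype m] [Fintype n] (A : Matrix m n ℝ) :
    frobNorm A = Real.sqrt (frobSq A) := rfl

lemma frobSq_eq_trace {m n : Type*} [Fintype m] [Fintype n] (A : Matrix m n ℝ) :
    frobSq A = trace (Aᵀ * A) := by
  simp [frobSq, trace, Matrix.mul_apply, diag, pow_two]
  exact Finset.sum_comm

lemma frobSq_eq_sq {m n : Type*} [Fintype m] [Fintype n] (A : Matrix m n ℝ) :
    frobSq A = frobNorm A ^ 2 := by
  rw [frobNorm_eq, Real.sq_sqrt (frobSq_nonneg A)]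

lemma frobSq_mul_of_orthonormal {p m n : Type*} [Fintype p] [Fintype m] [DecidableEq m] [Fintype n]
    (U : Matrix p m ℝ) (hU : Uᵀ * U = 1) (X : Matrix m n ℝ) :
    frobSq (U * X) = frobSq X := by
  rw [frobSq_eq_trace, frobSq_eq_trace, Matrix.transpose_mul, Matrix.mul_assoc,
    ← Matrix.mul_assoc Uᵀ, hU, Matrix.one_mul]

lemma frobSq_add_of_orth {p n m : Type*} [Fintype p] [Fintype n] [Fintype m]
    (U : Matrix p m ℝ) (X : Matrix m n ℝ) (E : Matrix p n ℝ) (h : Uᵀ * E = 0) :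
    frobSq (U * X + E) = frobSq (U * X) + frobSq E := by
  have hc : trace ((U * X)ᵀ * E) = 0 := by
    rw [Matrix.transpose_mul, Matrix.mul_assoc, h, Matrix.mul_zero, trace_zero]
  rw [frobSq_eq_trace, frobSq_eq_trace, frobSq_eq_trace, Matrix.transpose_add,
    Matrix.add_mul, Matrix.mul_add, Matrix.mul_add, trace_add, trace_add, trace_add]
  have hc' : trace (Eᵀ * (U * X)) = 0 := by
    rw [← trace_transpose, Matrix.transpose_mul, Matrix.transpose_transpose, hc]
  rw [hc, hc']; ring

/-- **TT-ICE error bound (Theorem 3.1).**  If a matrix `B₀` is successively split as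
`ρᵢ(B_{i-1}) = Uᵢ Bᵢ + Eᵢ` with `Uᵢ` having orthonormal columns, `Uᵢᵀ Eᵢ = 0`,
`‖Eᵢ‖_F ≤ εᵢ`, and the reshapings `ρᵢ` preserve the Frobenius norm, then the
backwards-reconstructed approximation `B̂₀` (with `B̂_d = B_d`,
`B̂_{i-1} = ρᵢ⁻¹(Uᵢ B̂ᵢ)`) satisfies `‖B₀ − B̂₀‖_F ≤ √(∑ᵢ εᵢ²)`. -/
theorem tt_ice_error_bound
    (d : ℕ) (hd : 1 ≤ d)
    (m n : Fin (d + 1) → Type) (p : Fin d → Type)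
    [∀ i, Fintype (m i)] [∀ i, DecidableEq (m i)]
    [∀ i, Fintype (n i)] [∀ i, Fintype (p i)]
    (B Bh : ∀ i, Matrix (m i) (n i) ℝ)
    (ρ : ∀ i : Fin d, Matrix (m i.castSucc) (n i.castSucc) ℝ ≃ₗ[ℝ] Matrix (p i) (n i.succ) ℝ)
    (hρ : ∀ (i : Fin d) (X : Matrix (m i.castSucc) (n i.castSucc) ℝ),
      frobNorm (ρ i X) = frobNorm X)
    (U : ∀ i : Fin d, Matrix (p i) (m i.succ) ℝ)
    (hU : ∀ i : Fin d, (U i)ᵀ * U i = 1)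
    (E : ∀ i : Fin d, Matrix (p i) (n i.succ) ℝ)
    (ε : Fin d → ℝ) (hεnn : ∀ i, 0 ≤ ε i)
    (hsplit : ∀ i : Fin d, ρ i (B i.castSucc) = U i * B i.succ + E i)
    (horth : ∀ i : Fin d, (U i)ᵀ * E i = 0)
    (hE : ∀ i : Fin d, frobNorm (E i) ≤ ε i)
    (hlast : Bh (Fin.last d) = B (Fin.last d))
    (hrec : ∀ i : Fin d, Bh i.castSucc = (ρ i).symm (U i * Bh i.succ)) :
    frobNorm (B 0 - Bh 0) ≤ Real.sqrt (∑ i, ε i ^ 2) := by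
  -- squared frobenius norm of ρ preserved
  have hρsq : ∀ (i : Fin d) (X : Matrix (m i.castSucc) (n i.castSucc) ℝ),
      frobSq (ρ i X) = frobSq X := by
    intro i X
    rw [frobSq_eq_sq, frobSq_eq_sq, hρ]
  have key : ∀ i : Fin (d + 1),
      frobSq (B i - Bh i) ≤ ∑ j : Fin d, if i ≤ j.castSucc then ε j ^ 2 else 0 := by
    intro i
    induction i using Fin.reverseInduction with
    | last =>
      have h0 : B (Fin.last d) - Bh (Fin.last d) = 0 := by rw [hlast, sub_self]
      rw [h0]
      have : frobSq (0 : Matrix (m (Fin.last d)) (n (Fin.last d)) ℝ) = 0 := by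
        simp [frobSq]
      rw [this]
      apply Finset.sum_nonneg; intro j _
      split
      · positivity
      · exact le_rfl
    | cast i ih =>
      have hdiff : ρ i (B i.castSucc - Bh i.castSucc)
          = U i * (B i.succ - Bh i.succ) + E i := by
        rw [map_sub, hsplit, hrec, LinearEquiv.apply_symm_apply, Matrix.mul_sub]
        abel
      have h1 : frobSq (B i.castSucc - Bh i.castSucc)
          = frobSq (B i.succ - Bh i.succ) + frobSq (E i) := by
        rw [← hρsq i, hdiff, frobSq_add_of_orth _ _ _ (horth i),
          frobSq_mul_of_orthonormal _ (hU i)]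
      have hEi : frobSq (E i) ≤ ε i ^ 2 := by
        rw [frobSq_eq_sq]
        exact pow_le_pow_left₀ (Real.sqrt_nonneg _) (hE i) 2
      have hsum : (∑ j : Fin d, if i.castSucc ≤ j.castSucc then ε j ^ 2 else 0)
          = (∑ j : Fin d, if i.succ ≤ j.castSucc then ε j ^ 2 else 0) + ε i ^ 2 := by
        have hterm : ∀ j : Fin d,
            (if i.castSucc ≤ j.castSucc then ε j ^ 2 else 0)
            = (if i.succ ≤ j.castSucc then ε j ^ 2 else 0)
              + (if j = i then ε j ^ 2 else 0) := by
          intro j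
          by_cases hji : j = i
          · subst hji
            simp [Fin.le_def]
          · have hne : (j : ℕ) ≠ (i : ℕ) := fun h => hji (Fin.ext h)
            by_cases hle : (i : ℕ) ≤ (j : ℕ)
            · have : (i : ℕ) + 1 ≤ (j : ℕ) := by omega
              simp [Fin.le_def, hji, hle, this]
            · have : ¬ ((i : ℕ) + 1 ≤ (j : ℕ)) := by omega
              simp [Fin.le_def, hji, hle, this]
        rw [Finset.sum_congr rfl (fun j _ => hterm j), Finset.sum_add_distrib,
          Finset.sum_ite_eq' Finset.univ i (fun j => ε j ^ 2)]
        simp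
      rw [h1, hsum]
      exact add_le_add ih hEi
  have h0 := key 0
  have hsimp : (∑ j : Fin d, if (0 : Fin (d+1)) ≤ j.castSucc then ε j ^ 2 else 0)
      = ∑ j : Fin d, ε j ^ 2 := by
    apply Finset.sum_congr rfl; intro j _
    simp [Fin.le_def]
  rw [hsimp] at h0
  rw [frobNorm_eq]
  exact Real.sqrt_le_sqrt h0
end

section
/- Let d ≥ 1 be an integer and ε_des > 0. Suppose B₀ is a nonzero real matrix and for each i = 1,…,d we are given a Frobenius-norm-preserving linear bijection ρᵢ (a reshaping) defined on the space containing B_{i-1}, a real matrix Uᵢ with orthonormal columns, and real matrices Bᵢ, Eᵢ such that ρᵢ(B_{i-1}) = Uᵢ Bᵢ + Eᵢ, Uᵢᵀ Eᵢ = 0, and ‖Eᵢ‖_F ≤ ε_des · ‖B₀‖_F / √d. Define B̂_d := B_d and B̂_{i-1} := ρᵢ⁻¹(Uᵢ B̂ᵢ) for i = d,…,1. Then ‖B₀ − B̂₀‖_F / ‖B₀‖_F ≤ ε_des. -/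
open Matrix

noncomputable def fsq {m n : Type*} [Fintype m] [Fintype n] (A : Matrix m n ℝ) : ℝ :=
  ∑ i, ∑ j, (A i j) ^ 2

lemma fsq_nonneg {m n : Type*} [Fintype m] [Fintype n] (A : Matrix m n ℝ) : 0 ≤ fsq A :=
  Finset.sum_nonneg fun _ _ => Finset.sum_nonneg fun _ _ => sq_nonneg _

lemma frobNorm_eq_sqrt {m n : Type*} [Fintype m] [Fintype n] (A : Matrix m n ℝ) :
    frobNorm A = Real.sqrt (fsq A) := rfl

lemma frobNorm_nonneg {m n : Type*} [Fintype m] [Fintype n] (A : Matrix m n ℝ) :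
    0 ≤ frobNorm A := Real.sqrt_nonneg _

lemma fsq_eq_frob_sq {m n : Type*} [Fintype m] [Fintype n] (A : Matrix m n ℝ) :
    fsq A = frobNorm A ^ 2 := (Real.sq_sqrt (fsq_nonneg A)).symm

lemma fsq_eq_trace {m n : Type*} [Fintype m] [Fintype n] (A : Matrix m n ℝ) :
    fsq A = Matrix.trace (Aᵀ * A) := by
  unfold fsq Matrix.trace
  rw [Finset.sum_comm]
  simp [Matrix.mul_apply, Matrix.diag, pow_two]

lemma fsq_split {p m n : Type*} [Fintype p] [Fintype m] [DecidableEq m] [Fintype n]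
    (U : Matrix p m ℝ) (X : Matrix m n ℝ) (E : Matrix p n ℝ)
    (hU : Uᵀ * U = 1) (hE : Uᵀ * E = 0) :
    fsq (U * X + E) = fsq X + fsq E := by
  have h1 : Xᵀ * Uᵀ * (U * X) = Xᵀ * X := by
    rw [Matrix.mul_assoc, ← Matrix.mul_assoc Uᵀ, hU, Matrix.one_mul]
  have h2 : Xᵀ * Uᵀ * E = 0 := by
    rw [Matrix.mul_assoc, hE, Matrix.mul_zero]
  have hEU : Eᵀ * U = 0 := by
    have := congrArg Matrix.transpose hE
    simpa using this
  have h3 : Eᵀ * (U * X) = 0 := by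
    rw [← Matrix.mul_assoc, hEU, Matrix.zero_mul]
  rw [fsq_eq_trace, fsq_eq_trace X, fsq_eq_trace E]
  rw [Matrix.transpose_add, Matrix.transpose_mul, Matrix.add_mul, Matrix.mul_add,
    Matrix.mul_add, h1, h2, h3]
  simp [Matrix.trace_add]

lemma frobNorm_pos {m n : Type*} [Fintype m] [Fintype n] (A : Matrix m n ℝ) (hA : A ≠ 0) :
    0 < frobNorm A := by
  rcases lt_or_eq_of_le (frobNorm_nonneg A) with h | h
  · exact h
  · exfalso
    apply hA
    have hs : fsq A = 0 := by
      have := Real.sqrt_eq_zero (fsq_nonneg A) |>.mp (by rw [← frobNorm_eq_sqrt, ← h])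
      exact this
    ext i j
    have h1 := (Finset.sum_eq_zero_iff_of_nonneg
      (fun i _ => Finset.sum_nonneg fun j _ => sq_nonneg (A i j))).mp hs i (Finset.mem_univ i)
    have h2 := (Finset.sum_eq_zero_iff_of_nonneg
      (fun j _ => sq_nonneg (A i j))).mp h1 j (Finset.mem_univ j)
    have := pow_eq_zero_iff (n := 2) (by norm_num) |>.mp h2
    simpa using this
/-- **TT-ICE relative error bound (Corollary 3.2).**  If every truncation error in the
sequential orthogonal splits `ρᵢ(B_{i-1}) = Uᵢ Bᵢ + Eᵢ` satisfies
`‖Eᵢ‖_F ≤ ε_des ‖B₀‖_F / √d`, then the backwards-reconstructed approximation `B̂₀`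
(with `B̂_d = B_d`, `B̂_{i-1} = ρᵢ⁻¹(Uᵢ B̂ᵢ)`) satisfies
`‖B₀ − B̂₀‖_F / ‖B₀‖_F ≤ ε_des`. -/
theorem tt_ice_relative_error_bound
    (d : ℕ) (hd : 1 ≤ d) (εdes : ℝ) (hεdes : 0 < εdes)
    (m n : Fin (d + 1) → Type) (p : Fin d → Type)
    [∀ i, Fintype (m i)] [∀ i, DecidableEq (m i)]
    [∀ i, Fintype (n i)] [∀ i, Fintype (p i)]
    (B Bh : ∀ i, Matrix (m i) (n i) ℝ)
    (hB0 : B 0 ≠ 0)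
    (ρ : ∀ i : Fin d, Matrix (m i.castSucc) (n i.castSucc) ℝ ≃ₗ[ℝ] Matrix (p i) (n i.succ) ℝ)
    (hρ : ∀ (i : Fin d) (X : Matrix (m i.castSucc) (n i.castSucc) ℝ),
      frobNorm (ρ i X) = frobNorm X)
    (U : ∀ i : Fin d, Matrix (p i) (m i.succ) ℝ)
    (hU : ∀ i : Fin d, (U i)ᵀ * U i = 1)
    (E : ∀ i : Fin d, Matrix (p i) (n i.succ) ℝ)
    (hsplit : ∀ i : Fin d, ρ i (B i.castSucc) = U i * B i.succ + E i)
    (horth : ∀ i : Fin d, (U i)ᵀ * E i = 0)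
    (hE : ∀ i : Fin d, frobNorm (E i) ≤ εdes * frobNorm (B 0) / Real.sqrt d)
    (hlast : Bh (Fin.last d) = B (Fin.last d))
    (hrec : ∀ i : Fin d, Bh i.castSucc = (ρ i).symm (U i * Bh i.succ)) :
    frobNorm (B 0 - Bh 0) / frobNorm (B 0) ≤ εdes := by
  set N := frobNorm (B 0) with hN
  have hNpos : 0 < N := frobNorm_pos _ hB0
  set b := εdes * N / Real.sqrt d with hb
  have hdpos : (0:ℝ) < Real.sqrt d := Real.sqrt_pos.mpr (by exact_mod_cast hd)
  have hbpos : 0 ≤ b := by positivity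
  set c := b ^ 2 with hc
  -- per-step error bounds
  have hEc : ∀ i : Fin d, fsq (E i) ≤ c := by
    intro i
    rw [fsq_eq_frob_sq, hc]
    exact pow_le_pow_left₀ (frobNorm_nonneg _) (hE i) 2
  have step : ∀ i : Fin d,
      fsq (B i.castSucc - Bh i.castSucc) = fsq (B i.succ - Bh i.succ) + fsq (E i) := by
    intro i
    have hρeq : ρ i (B i.castSucc - Bh i.castSucc)
        = U i * (B i.succ - Bh i.succ) + E i := by
      rw [map_sub, hsplit, hrec, LinearEquiv.apply_symm_apply, Matrix.mul_sub]
      abel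
    have h1 : fsq (B i.castSucc - Bh i.castSucc)
        = fsq (U i * (B i.succ - Bh i.succ) + E i) := by
      rw [fsq_eq_frob_sq, fsq_eq_frob_sq, ← hρeq, hρ]
    rw [h1, fsq_split _ _ _ (hU i) (horth i)]
  -- induction
  have hcongrEq : ∀ (a b : Fin (d+1)), a = b → fsq (B a - Bh a) = fsq (B b - Bh b) := by
    rintro a b rfl; rfl
  let idx : ℕ → Fin (d+1) := fun k => ⟨d - k, Nat.lt_succ_of_le (Nat.sub_le d k)⟩
  have hidx : ∀ k, (idx k).val = d - k := fun _ => rfl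
  have key : ∀ k, k ≤ d → fsq (B (idx k) - Bh (idx k)) ≤ k * c := by
    intro k
    induction k with
    | zero =>
      intro _
      have h00 : idx 0 = Fin.last d := by
        apply Fin.ext; rw [hidx]; simp [Fin.last]
      rw [hcongrEq _ _ h00, hlast]
      simp [fsq]
    | succ k ih =>
      intro hk
      have hk' : k ≤ d := by omega
      set j : Fin d := ⟨d - (k+1), by omega⟩ with hj
      have hcs : j.castSucc = idx (k+1) := by
        apply Fin.ext; simp [hj, hidx]
      have hss : j.succ = idx k := by
        apply Fin.ext; rw [hidx]; simp [hj]; omega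
      calc fsq (B (idx (k+1)) - Bh (idx (k+1)))
          = fsq (B j.castSucc - Bh j.castSucc) := hcongrEq _ _ hcs.symm
        _ = fsq (B j.succ - Bh j.succ) + fsq (E j) := step j
        _ ≤ k * c + c := by
            refine add_le_add ?_ (hEc j)
            rw [hcongrEq _ _ hss]
            exact ih hk'
        _ = (↑(k+1)) * c := by push_cast; ring
  have h0 : idx d = 0 := by
    apply Fin.ext; rw [hidx]; simp
  have hfin : fsq (B 0 - Bh 0) ≤ d * c := by
    have hkey := key d le_rfl
    rwa [hcongrEq _ _ h0] at hkey
  have hdc : (d:ℝ) * c = (εdes * N) ^ 2 := by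
    rw [hc, hb]
    rw [div_pow, Real.sq_sqrt (by positivity : (0:ℝ) ≤ (d:ℝ))]
    field_simp
  have hfrob : frobNorm (B 0 - Bh 0) ≤ εdes * N := by
    rw [frobNorm_eq_sqrt]
    calc Real.sqrt (fsq (B 0 - Bh 0)) ≤ Real.sqrt ((εdes * N) ^ 2) :=
          Real.sqrt_le_sqrt (by rw [← hdc]; exact hfin)
      _ = εdes * N := Real.sqrt_sq (by positivity)
  rw [div_le_iff₀ hNpos]
  exact hfrob
end

section
/- Let d ≥ 1 be an integer, let r₀ = 1 and r₁,…,r_{d+1} be positive integers, and let s₁,…,s_d be natural numbers. For j = 1,…,d+1 let A_j ∈ ℝ^{r_{j-1}×r_j}, and let L₁ ∈ ℝ^{1×s₁}, L_{j,1} ∈ ℝ^{r_{j-1}×s_j} and L_{j,2} ∈ ℝ^{s_{j-1}×s_j} for j = 2,…,d be arbitrary real matrices. Define the updated block matrices M₁ := [A₁ L₁] ∈ ℝ^{1×(r₁+s₁)}, M_j := [[A_j, L_{j,1}]; [0_{s_{j-1}×r_j}, L_{j,2}]] ∈ ℝ^{(r_{j-1}+s_{j-1})×(r_j+s_j)} for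 j = 2,…,d, and M_{d+1} := [A_{d+1}; 0_{s_d×r_{d+1}}] ∈ ℝ^{(r_d+s_d)×r_{d+1}}. Then M₁ M₂ ⋯ M_{d+1} = A₁ A₂ ⋯ A_{d+1}. -/
open Matrix

/-- Product `M₁ * M₂ * ⋯ * M_{N+1}` of a chain of real matrices with compatible
(but possibly heterogeneous) index types `τ 0, τ 1, …, τ (N+1)`. -/
noncomputable def chainProd : (N : ℕ) → (τ : Fin (N + 2) → Type) → (inst : ∀ i, Fintype (τ i)) →
    (M : ∀ j : Fin (N + 1), Matrix (τ j.castSucc) (τ j.succ) ℝ) →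
    Matrix (τ 0) (τ (Fin.last (N + 1))) ℝ
  | 0, _, _, M => M 0
  | N + 1, τ, inst, M =>
    letI := inst
    M 0 * chainProd N (fun i => τ i.succ) (fun i => inst i.succ) (fun j => M j.succ)

lemma chainProd_fromBlocks (N : ℕ) :
    ∀ (ρ σ : Fin (N + 2) → Type) (iρ : ∀ i, Fintype (ρ i)) (iσ : ∀ i, Fintype (σ i))
      (A : ∀ j : Fin (N + 1), Matrix (ρ j.castSucc) (ρ j.succ) ℝ)
      (L : ∀ j : Fin (N + 1), Matrix (ρ j.castSucc) (σ j.succ) ℝ)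
      (B : ∀ j : Fin (N + 1), Matrix (σ j.castSucc) (σ j.succ) ℝ),
      ∃ L' : Matrix (ρ 0) (σ (Fin.last (N + 1))) ℝ,
        chainProd N (fun i => ρ i ⊕ σ i) (fun i => @instFintypeSum _ _ (iρ i) (iσ i))
            (fun j => Matrix.fromBlocks (A j) (L j) 0 (B j))
          = Matrix.fromBlocks (chainProd N ρ iρ A) L' 0 (chainProd N σ iσ B) := by
  induction N with
  | zero =>
    intro ρ σ iρ iσ A L B
    exact ⟨L 0, rfl⟩
  | succ N ih =>
    intro ρ σ iρ iσ A L B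
    obtain ⟨L', hL'⟩ := ih (fun i => ρ i.succ) (fun i => σ i.succ) (fun i => iρ i.succ)
      (fun i => iσ i.succ) (fun j => A j.succ) (fun j => L j.succ) (fun j => B j.succ)
    refine ⟨?_, ?_⟩
    · letI := fun i => iρ i; letI := fun i => iσ i
      exact A 0 * L' + L 0 * chainProd N (fun i => σ i.succ) (fun i => iσ i.succ)
        (fun j => B j.succ)
    · letI := fun i => iρ i; letI := fun i => iσ i
      simp only [chainProd]
      rw [hL', Matrix.fromBlocks_multiply]
      simp
      exact ⟨by erw [Matrix.mul_zero, add_zero], by erw [Matrix.zero_mul, Matrix.mul_zero, add_zero]; rfl,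
        by erw [Matrix.zero_mul, zero_add]⟩

/-- **Invariance of previous reconstructions under TT-ICE core expansion (Theorem 3.3,
computational core).**  For core slices `A_j ∈ ℝ^{r_{j-1}×r_j}` (j = 1,…,d+1, with r₀ = 1),
expand each slice into the block matrix `M_j = [[A_j, L_{j,1}]; [0, L_{j,2}]]`, where the
first slice gets no new rows (`s₀ = 0`, so `M₁ = [A₁ L₁]`) and the last slice gets no new
columns (`s_{d+1} = 0`, so `M_{d+1} = [A_{d+1}; 0]`).  Then the product of the expanded
slices equals the product of the original slices: `M₁ M₂ ⋯ M_{d+1} = A₁ A₂ ⋯ A_{d+1}`. -/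
theorem tt_ice_block_product_invariance
    (d : ℕ) (hd : 1 ≤ d)
    (r : Fin (d + 2) → ℕ) (hr0 : r 0 = 1) (hrpos : ∀ j, 0 < r j)
    (s : Fin (d + 2) → ℕ) (hs0 : s 0 = 0) (hslast : s (Fin.last (d + 1)) = 0)
    (A : ∀ j : Fin (d + 1), Matrix (Fin (r j.castSucc)) (Fin (r j.succ)) ℝ)
    (L₁ : ∀ j : Fin (d + 1), Matrix (Fin (r j.castSucc)) (Fin (s j.succ)) ℝ)
    (L₂ : ∀ j : Fin (d + 1), Matrix (Fin (s j.castSucc)) (Fin (s j.succ)) ℝ) :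
    (chainProd d (fun j => Fin (r j) ⊕ Fin (s j)) (fun _ => inferInstance)
        (fun j => Matrix.fromBlocks (A j) (L₁ j) 0 (L₂ j))).submatrix Sum.inl Sum.inl
      = chainProd d (fun j => Fin (r j)) (fun _ => inferInstance) A := by
  obtain ⟨L', hL'⟩ := chainProd_fromBlocks d (fun j => Fin (r j)) (fun j => Fin (s j))
    (fun _ => inferInstance) (fun _ => inferInstance) A L₁ L₂
  rw [hL']
  ext i j
  simp [Matrix.fromBlocks]
end

section
/- Let U ∈ ℝ^{m×r} and W ∈ ℝ^{m×q} satisfy Uᵀ U = I_r, Wᵀ W = I_q, and Uᵀ W = 0, let Y ∈ ℝ^{m×p}, and set Q := [U W], R := Y − U Uᵀ Y. Then ‖Y − Q Qᵀ Y‖_F = ‖R − W Wᵀ R‖_F, and consequently ‖Y − Q Qᵀ Y‖_F ≤ ‖Y − U Uᵀ Y‖_F. -/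
open Matrix

/-- **Basis expansion never increases the projection error (TT-ICE core expansion).**
If `U`, `W` have orthonormal columns with `Uᵀ W = 0`, `Q = [U W]`, and
`R = Y − U Uᵀ Y`, then `‖Y − Q Qᵀ Y‖_F = ‖R − W Wᵀ R‖_F`, and consequently
`‖Y − Q Qᵀ Y‖_F ≤ ‖Y − U Uᵀ Y‖_F`. -/
theorem basis_expansion_error
    (m r q p : ℕ)
    (U : Matrix (Fin m) (Fin r) ℝ) (W : Matrix (Fin m) (Fin q) ℝ)
    (hU : Uᵀ * U = 1) (hW : Wᵀ * W = 1) (hUW : Uᵀ * W = 0)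
    (Y : Matrix (Fin m) (Fin p) ℝ)
    (Q : Matrix (Fin m) (Fin r ⊕ Fin q) ℝ) (hQ : Q = Matrix.fromCols U W)
    (R : Matrix (Fin m) (Fin p) ℝ) (hR : R = Y - U * Uᵀ * Y) :
    frobNorm (Y - Q * Qᵀ * Y) = frobNorm (R - W * Wᵀ * R) ∧
      frobNorm (Y - Q * Qᵀ * Y) ≤ frobNorm (Y - U * Uᵀ * Y) := by
  have hWU : Wᵀ * U = 0 := by
    have := congrArg Matrix.transpose hUW
    simpa using this
  -- Q Qᵀ = U Uᵀ + W Wᵀ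
  have hQQ : Q * Qᵀ = U * Uᵀ + W * Wᵀ := by
    rw [hQ, transpose_fromCols, fromCols_mul_fromRows]
  -- exact matrix identity
  have key : Y - Q * Qᵀ * Y = R - W * Wᵀ * R := by
    rw [hQQ, hR]
    have h1 : W * Wᵀ * (Y - U * Uᵀ * Y) = W * Wᵀ * Y := by
      rw [Matrix.mul_sub]
      have : W * Wᵀ * (U * Uᵀ * Y) = 0 := by
        calc W * Wᵀ * (U * Uᵀ * Y) = W * (Wᵀ * U) * (Uᵀ * Y) := by
              simp only [Matrix.mul_assoc]
          _ = 0 := by rw [hWU]; simp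
      rw [this, sub_zero]
    rw [h1, Matrix.add_mul]
    abel
  refine ⟨by rw [key], ?_⟩
  rw [key, ← hR]
  -- Pythagoras: let A = R - W Wᵀ R, B = W Wᵀ R
  set A := R - W * Wᵀ * R with hA
  set B := W * Wᵀ * R with hB
  have hWA : Wᵀ * A = 0 := by
    rw [hA, Matrix.mul_sub]
    have : Wᵀ * (W * Wᵀ * R) = Wᵀ * R := by
      calc Wᵀ * (W * Wᵀ * R) = (Wᵀ * W) * (Wᵀ * R) := by simp only [Matrix.mul_assoc]
        _ = Wᵀ * R := by rw [hW, Matrix.one_mul]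
    rw [this, sub_self]
  have hcross : ∑ i, ∑ j, A i j * B i j = 0 := by
    have hBA : Bᵀ * A = 0 := by
      rw [hB, transpose_mul, transpose_mul, transpose_transpose]
      calc Rᵀ * (W * Wᵀ) * A = Rᵀ * (W * (Wᵀ * A)) := by
            simp only [Matrix.mul_assoc]
        _ = 0 := by rw [hWA]; simp
    have htr : ∑ j, (Bᵀ * A) j j = 0 := by simp [hBA]
    calc ∑ i, ∑ j, A i j * B i j = ∑ j, ∑ i, B i j * A i j := by
          rw [Finset.sum_comm]; congr 1; ext j; congr 1; ext i; ring
      _ = ∑ j, (Bᵀ * A) j j := by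
          simp [Matrix.mul_apply, Matrix.transpose_apply]
      _ = 0 := htr
  have hsum : ∑ i, ∑ j, (R i j) ^ 2
      = (∑ i, ∑ j, (A i j) ^ 2) + (∑ i, ∑ j, (B i j) ^ 2) := by
    have hRAB : R = A + B := by rw [hA, hB]; abel
    calc ∑ i, ∑ j, (R i j) ^ 2
        = ∑ i, ∑ j, ((A i j) ^ 2 + 2 * (A i j * B i j) + (B i j) ^ 2) := by
          rw [hRAB]; congr 1; ext i; congr 1; ext j
          simp [Matrix.add_apply]; ring
      _ = (∑ i, ∑ j, (A i j) ^ 2) + 2 * (∑ i, ∑ j, A i j * B i j)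
            + (∑ i, ∑ j, (B i j) ^ 2) := by
          simp [Finset.sum_add_distrib, Finset.mul_sum]
      _ = _ := by rw [hcross]; ring
  unfold frobNorm
  apply Real.sqrt_le_sqrt
  rw [hsum]
  have : (0:ℝ) ≤ ∑ i, ∑ j, (B i j) ^ 2 :=
    Finset.sum_nonneg fun i _ => Finset.sum_nonneg fun j _ => sq_nonneg _
  linarith
end
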